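/- Every hypercomplex manifold (M,I,J,K) admits a unique torsion-free affine connection ∇ (the Obata connection) satisfying ∇I = ∇J = ∇K = 0. -/
import Mathlib


/-!
STATEMENT 19.  Every hypercomplex manifold `(M,I,J,K)` admits a unique torsion-free
affine connection `∇` (the Obata connection) satisfying `∇I = ∇J = ∇K = 0`.

The smooth manifold is modelled Lie–Rinehart style: a commutative ℝ-algebra `C` of
smooth functions and a `C`-module `V` of vector fields carrying a Lie bracket which
acts on `C` by derivations.  The hypercomplex structure is a triple of `C`-linear
endomorphisms `I`, `J`, `K` of `V` satisfying the quaternionic relations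
`I² = J² = K² = IJK = -Id`, each with vanishing Nijenhuis tensor (integrability).
An affine connection is a map `∇ : V → V → V` which is tensorial in the first
argument and a derivation in the second.
-/

open Module

/-- Lie–Rinehart style model of the vector fields of a hypercomplex manifold
`(M,I,J,K)`. -/
structure HypercomplexVectorFields where
  /-- the algebra of smooth functions -/
  C : Type
  [instC : CommRing C]
  [instAlg : Algebra ℝ C]
  /-- the module of vector fields -/
  V : Type
  [instV : AddCommGroup V]
  [instModC : Module C V]
  [instModR : Module ℝ V]
  [instTower : IsScalarTower ℝ C V]
  /-- the Lie bracket of vector fields -/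
  bracket : V → V → V
  bracket_add_left : ∀ X Y Z, bracket (X + Y) Z = bracket X Z + bracket Y Z
  bracket_add_right : ∀ X Y Z, bracket X (Y + Z) = bracket X Y + bracket X Z
  bracket_smul_left : ∀ (r : ℝ) (X Y), bracket (r • X) Y = r • bracket X Y
  bracket_antisymm : ∀ X Y, bracket X Y = - bracket Y X
  jacobi : ∀ X Y Z,
    bracket X (bracket Y Z) + bracket Y (bracket Z X) + bracket Z (bracket X Y) = 0
  /-- the action of vector fields on functions by derivations -/
  act : V → C → C
  act_leibniz : ∀ X (f : C) Y, bracket X (f • Y) = f • bracket X Y + (act X f) • Y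
  /-- the three complex structures -/
  I : V →ₗ[C] V
  J : V →ₗ[C] V
  K : V →ₗ[C] V
  I_sq : ∀ v, I (I v) = -v
  J_sq : ∀ v, J (J v) = -v
  K_sq : ∀ v, K (K v) = -v
  IJK : ∀ v, I (J (K v)) = -v
  /-- integrability: the Nijenhuis tensors of `I`, `J` and `K` vanish -/
  I_integrable : ∀ X Y,
    bracket (I X) (I Y) - I (bracket (I X) Y) - I (bracket X (I Y)) +
      I (I (bracket X Y)) = 0
  J_integrable : ∀ X Y,
    bracket (J X) (J Y) - J (bracket (J X) Y) - J (bracket X (J Y)) +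
      J (J (bracket X Y)) = 0
  K_integrable : ∀ X Y,
    bracket (K X) (K Y) - K (bracket (K X) Y) - K (bracket X (K Y)) +
      K (K (bracket X Y)) = 0

namespace HypercomplexVectorFields

attribute [instance] instC instAlg instV instModC instModR instTower

variable (M : HypercomplexVectorFields)

/-- `D` is an affine connection: additive in both arguments, tensorial (`C`-linear)
in the first argument, and a Leibniz derivation in the second argument. -/
def IsConnection (D : M.V → M.V → M.V) : Prop :=
  (∀ X Y Z, D (X + Y) Z = D X Z + D Y Z) ∧
  (∀ X Y Z, D X (Y + Z) = D X Y + D X Z) ∧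
  (∀ (f : M.C) X Y, D (f • X) Y = f • D X Y) ∧
  (∀ (f : M.C) X Y, D X (f • Y) = f • D X Y + (M.act X f) • Y)

/-- `D` is torsion-free: `D_X Y - D_Y X = [X,Y]`. -/
def IsTorsionFree (D : M.V → M.V → M.V) : Prop :=
  ∀ X Y, D X Y - D Y X = M.bracket X Y

/-- `D` preserves the endomorphism `L`, i.e. `∇L = 0`. -/
def Preserves (D : M.V → M.V → M.V) (L : M.V → M.V) : Prop :=
  ∀ X Y, D X (L Y) = L (D X Y)

end HypercomplexVectorFields

section ObataAux

namespace HypercomplexVectorFields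

variable (M : HypercomplexVectorFields)

/-- `C`-linear maps commute with real scalars. -/
lemma smulR (f : M.V →ₗ[M.C] M.V) (r : ℝ) (v : M.V) : f (r • v) = r • f v := by
  rw [show r • v = (r • (1 : M.C)) • v by rw [smul_assoc, one_smul], map_smul,
    smul_assoc, one_smul]

/-- `C` scalars commute with real scalars on `V`. -/
lemma smulC (c : M.C) (r : ℝ) (v : M.V) : c • (r • v) = r • (c • v) := by
  rw [show r • v = (r • (1 : M.C)) • v by rw [smul_assoc, one_smul], ← mul_smul,
    mul_comm, mul_smul, smul_assoc, one_smul]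

lemma comp_IJ (v : M.V) : M.I (M.J v) = M.K v := by
  have h := M.IJK (M.K v)
  rw [M.K_sq, map_neg, map_neg, neg_inj] at h
  exact h

lemma comp_IK (v : M.V) : M.I (M.K v) = -(M.J v) := by
  rw [← comp_IJ, M.I_sq]

lemma comp_KJ (v : M.V) : M.K (M.J v) = -(M.I v) := by
  rw [← comp_IJ, M.J_sq, map_neg]

lemma comp_JIJ (v : M.V) : M.J (M.I (M.J v)) = M.I v := by
  have h : M.I (M.J (M.I (M.J v))) = -v := by
    rw [comp_IJ, comp_IJ, M.K_sq]
  have h2 := congrArg M.I h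
  rw [M.I_sq, map_neg, neg_inj] at h2
  rw [h2]

lemma comp_JI (v : M.V) : M.J (M.I v) = -(M.K v) := by
  have h := comp_JIJ M (-(M.J v))
  rw [map_neg, M.J_sq, neg_neg, map_neg, comp_IJ] at h
  exact h

lemma comp_KI (v : M.V) : M.K (M.I v) = M.J v := by
  rw [← comp_IJ, comp_JI, map_neg, comp_IK, neg_neg]

lemma comp_JK (v : M.V) : M.J (M.K v) = M.I v := by
  rw [← comp_IJ, comp_JIJ]

lemma br_zero_right (X : M.V) : M.bracket X 0 = 0 := by
  have h := M.bracket_add_right X 0 0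
  rw [add_zero] at h
  rwa [left_eq_add] at h

lemma br_neg_right (X Y : M.V) : M.bracket X (-Y) = -(M.bracket X Y) := by
  have h := M.bracket_add_right X Y (-Y)
  rw [add_neg_cancel, br_zero_right] at h
  exact eq_neg_of_add_eq_zero_right h.symm

lemma br_zero_left (Y : M.V) : M.bracket 0 Y = 0 := by
  rw [M.bracket_antisymm, br_zero_right, neg_zero]

lemma br_neg_left (X Y : M.V) : M.bracket (-X) Y = -(M.bracket X Y) := by
  rw [M.bracket_antisymm, br_neg_right, M.bracket_antisymm Y X]
  abel

lemma br_smul_left (f : M.C) (X Y : M.V) :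
    M.bracket (f • X) Y = f • M.bracket X Y - M.act Y f • X := by
  rw [M.bracket_antisymm, M.act_leibniz, M.bracket_antisymm Y X]
  module

/-- Normalized Nijenhuis identity for `I`. -/
lemma nI (X Y : M.V) :
    M.bracket (M.I X) (M.I Y) - M.I (M.bracket (M.I X) Y) - M.I (M.bracket X (M.I Y))
      - M.bracket X Y = 0 := by
  have h := M.I_integrable X Y
  rw [M.I_sq] at h
  linear_combination (norm := module) h

lemma nJ (X Y : M.V) :
    M.bracket (M.J X) (M.J Y) - M.J (M.bracket (M.J X) Y) - M.J (M.bracket X (M.J Y))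
      - M.bracket X Y = 0 := by
  have h := M.J_integrable X Y
  rw [M.J_sq] at h
  linear_combination (norm := module) h

lemma nK (X Y : M.V) :
    M.bracket (M.K X) (M.K Y) - M.K (M.bracket (M.K X) Y) - M.K (M.bracket X (M.K Y))
      - M.bracket X Y = 0 := by
  have h := M.K_integrable X Y
  rw [M.K_sq] at h
  linear_combination (norm := module) h

/-- The (doubled) Obata connection candidate. -/
def core (X Y : M.V) : M.V :=
  M.bracket X Y + M.J (M.bracket (M.J X) Y) - M.I (M.bracket X (M.I Y))
    - M.K (M.bracket (M.J X) (M.I Y))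

/-- The Obata connection. -/
noncomputable def obD (X Y : M.V) : M.V := (2 : ℝ)⁻¹ • M.core X Y

lemma core_add_left (X Y Z : M.V) : M.core (X + Y) Z = M.core X Z + M.core Y Z := by
  unfold core
  simp only [map_add, M.bracket_add_left]
  module

lemma core_add_right (X Y Z : M.V) : M.core X (Y + Z) = M.core X Y + M.core X Z := by
  unfold core
  simp only [map_add, M.bracket_add_right]
  module

lemma core_smul_left (f : M.C) (X Y : M.V) : M.core (f • X) Y = f • M.core X Y := by
  unfold core
  simp only [map_smul, br_smul_left, M.act_leibniz, map_sub, map_add, M.J_sq, M.I_sq,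
    comp_KJ, comp_KI]
  module

lemma core_smul_right (f : M.C) (X Y : M.V) :
    M.core X (f • Y) = f • M.core X Y + M.act X f • Y + M.act X f • Y := by
  unfold core
  simp only [map_smul, M.act_leibniz, map_sub, map_add, M.J_sq, M.I_sq, comp_KJ, comp_KI]
  module

lemma core_torsion (X Y : M.V) :
    M.core X Y - M.core Y X = M.bracket X Y + M.bracket X Y := by
  have hI := M.nI X Y
  have hJ := M.nJ X Y
  have hK := M.nK (M.I X) (M.I Y)
  rw [comp_KI, comp_KI] at hK
  have a1 := M.bracket_antisymm Y X
  have a2 := congrArg M.J (M.bracket_antisymm (M.J Y) X)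
  have a3 := congrArg M.I (M.bracket_antisymm Y (M.I X))
  have a4 := congrArg M.K (M.bracket_antisymm (M.J Y) (M.I X))
  rw [map_neg] at a2 a3 a4
  unfold core
  linear_combination (norm := module) hI - hJ + hK - a1 - a2 + a3 + a4

lemma core_I (X Y : M.V) : M.core X (M.I Y) = M.I (M.core X Y) := by
  unfold core
  simp only [map_sub, map_add, M.I_sq, comp_IJ, comp_IK, br_neg_right, map_neg]
  module

lemma core_J (X Y : M.V) : M.core X (M.J Y) = M.J (M.core X Y) := by
  have h1 := M.nJ X (M.J Y)
  rw [M.J_sq, br_neg_right, br_neg_right, map_neg] at h1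
  have h2 := congrArg M.I (M.nJ X (M.K Y))
  rw [comp_JK, map_sub, map_sub, map_sub, comp_IJ, comp_IJ, map_zero] at h2
  unfold core
  simp only [map_sub, map_add, comp_IJ, comp_JI, comp_JK, M.J_sq, map_neg]
  linear_combination (norm := module) h2 - h1

lemma obD_torsionFree : M.IsTorsionFree M.obD := by
  intro X Y
  rw [obD, obD, ← smul_sub, core_torsion, ← two_smul ℝ, inv_smul_smul₀ two_ne_zero]

lemma obD_connection : M.IsConnection M.obD := by
  refine ⟨fun X Y Z => ?_, fun X Y Z => ?_, fun f X Y => ?_, fun f X Y => ?_⟩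
  · simp only [obD, core_add_left]; module
  · simp only [obD, core_add_right]; module
  · simp only [obD, core_smul_left]; rw [smulC]
  · simp only [obD, core_smul_right, smul_add]
    rw [smulC, add_assoc, ← smul_add, ← two_smul ℝ, inv_smul_smul₀ two_ne_zero]

lemma obD_I : M.Preserves M.obD M.I := by
  intro X Y
  rw [obD, obD, core_I, smulR]

lemma obD_J : M.Preserves M.obD M.J := by
  intro X Y
  rw [obD, obD, core_J, smulR]

lemma obD_K : M.Preserves M.obD M.K := by
  intro X Y
  rw [obD, obD, show M.K Y = M.I (M.J Y) from (comp_IJ M Y).symm, core_I, core_J,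
    smulR, comp_IJ]

/-- Uniqueness: any torsion-free connection preserving `I` and `J` is the Obata
connection. -/
lemma eq_obD (D : M.V → M.V → M.V) (hT : M.IsTorsionFree D)
    (hI : M.Preserves D M.I) (hJ : M.Preserves D M.J) : D = M.obD := by
  funext X Y
  have hswap : ∀ A B : M.V, D A B = D B A + M.bracket A B := fun A B => by
    have h := hT A B
    linear_combination (norm := module) h
  have hB : ∀ X Y : M.V,
      D (M.J X) Y = M.J (D X Y) - M.J (M.bracket X Y) + M.bracket (M.J X) Y := by
    intro X Y
    rw [hswap (M.J X) Y, hJ Y X, show D Y X = D X Y - M.bracket X Y from by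
      have h := hT X Y
      linear_combination (norm := module) -h, map_sub]
  have e1 : D (M.J X) (M.I Y) =
      M.K (D X Y) - M.K (M.bracket X Y) + M.I (M.bracket (M.J X) Y) := by
    rw [hI (M.J X) Y, hB X Y, map_add, map_sub, comp_IJ, comp_IJ]
  have e2 : D (M.J X) (M.I Y) =
      -(M.K (D X Y)) - M.J (M.bracket X (M.I Y)) + M.bracket (M.J X) (M.I Y) := by
    rw [hB X (M.I Y), hI X Y, comp_JI]
  have e3 : (2 : ℝ) • M.K (D X Y) = M.K (M.bracket X Y) - M.I (M.bracket (M.J X) Y)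
      - M.J (M.bracket X (M.I Y)) + M.bracket (M.J X) (M.I Y) := by
    have h := e1.symm.trans e2
    linear_combination (norm := module) h
  have e4 : M.K (D X Y) = (2 : ℝ)⁻¹ • (M.K (M.bracket X Y) - M.I (M.bracket (M.J X) Y)
      - M.J (M.bracket X (M.I Y)) + M.bracket (M.J X) (M.I Y)) := by
    rw [← e3, inv_smul_smul₀ two_ne_zero]
  have e5 : D X Y = -(M.K (M.K (D X Y))) := by rw [M.K_sq, neg_neg]
  rw [e4, smulR] at e5
  simp only [map_add, map_sub, M.K_sq, comp_KI, comp_KJ] at e5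
  rw [e5]
  simp only [obD, core]
  module

lemma eq_obD' (D : M.V → M.V → M.V)
    (h : M.IsConnection D ∧ M.IsTorsionFree D ∧
      M.Preserves D M.I ∧ M.Preserves D M.J ∧ M.Preserves D M.K) : D = M.obD :=
  M.eq_obD D h.2.1 h.2.2.1 h.2.2.2.1

end HypercomplexVectorFields

end ObataAux

/-- Obata: every hypercomplex manifold admits a unique torsion-free
affine connection `∇` with `∇I = ∇J = ∇K = 0`. -/
theorem obata_connection_exists_unique (M : HypercomplexVectorFields) :
    ∃! D : M.V → M.V → M.V,
      M.IsConnection D ∧ M.IsTorsionFree D ∧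
      M.Preserves D M.I ∧ M.Preserves D M.J ∧ M.Preserves D M.K := by
  refine ⟨M.obD, ⟨M.obD_connection, M.obD_torsionFree, M.obD_I, M.obD_J, M.obD_K⟩,
    fun D h => M.eq_obD' D h⟩
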